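/- (All-or-nothing property.) Let I be a school matching instance and ρ,ρ'∈R(I) with ρ≠ρ'. Then ρ_+∩ρ'_+ = ∅ and ρ_−∩ρ'_− = ∅. -/

import Mathlib

open Classical
open scoped ENNReal

noncomputable section

namespace SM

/-- A school matching instance: students `A`, schools `B`, strict preference
orders over the other side plus the outside option `∅` (encoded as `none`),
and quotas `q b ≤ |A|`. -/
structure SchoolInstance (A B : Type) [Fintype A] [Fintype B] where
  prefA : A → Option B → Option B → Prop
  prefB : B → Option A → Option A → Prop
  prefA_sto : ∀ a, IsStrictTotalOrder (Option B) (prefA a)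
  prefB_sto : ∀ b, IsStrictTotalOrder (Option A) (prefB b)
  q : B → ℕ
  q_le : ∀ b, q b ≤ Fintype.card A

variable {A B : Type} [Fintype A] [Fintype B] [DecidableEq A] [DecidableEq B]

/-- A matching: every student is assigned a school or the outside option, and
each school receives at most `q b` students.  (A school is implicitly paired
with the outside option exactly when it has strictly fewer than `q b`
students, and a student is paired with the outside option exactly when it has
no school; this determines the set of pairs of the matching.) -/
structure Matching {A B : Type} [Fintype A] [Fintype B] (I : SchoolInstance A B) where
  toFun : A → Option B
  quota : ∀ b : B, (Finset.univ.filter fun a => toFun a = some b).card ≤ I.q b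

instance (I : SchoolInstance A B) : Nonempty (Matching I) := by
  refine ⟨⟨fun _ => none, fun b => ?_⟩⟩
  have h : (Finset.univ.filter fun _ : A => (none : Option B) = some b) = ∅ :=
    Finset.filter_false_of_mem (by intro a _; simp)
  rw [h, Finset.card_empty]
  exact Nat.zero_le _

/-- The students assigned to school `b`. -/
def assignedTo (I : SchoolInstance A B) (M : Matching I) (b : B) : Finset A :=
  Finset.univ.filter fun a => M.toFun a = some b

/-- School `b` has strictly fewer than `q b` students, i.e. is also paired
with the outside option. -/
def hasSlack (I : SchoolInstance A B) (M : Matching I) (b : B) : Prop :=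
  (assignedTo I M b).card < I.q b

/-- `x ∈ M(b)`: the partners of school `b` (students assigned to it, plus the
outside option when it is under quota). -/
def inPartners (I : SchoolInstance A B) (M : Matching I) (b : B) (x : Option A) : Prop :=
  (∃ a : A, x = some a ∧ M.toFun a = some b) ∨ (x = none ∧ hasSlack I M b)

/-- `M(b)` as a set. -/
def partnersSet (I : SchoolInstance A B) (M : Matching I) (b : B) : Set (Option A) :=
  {x | inPartners I M b x}

/-- The pair `ab` blocks `M`. -/
def BlocksPair (I : SchoolInstance A B) (M : Matching I) (a : A) (b : B) : Prop :=
  I.prefA a (some b) (M.toFun a) ∧ ∃ x, inPartners I M b x ∧ I.prefB b (some a) x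

/-- Student `a` blocks `M` (prefers the outside option to its partner). -/
def BlocksStudent (I : SchoolInstance A B) (M : Matching I) (a : A) : Prop :=
  I.prefA a none (M.toFun a)

/-- School `b` blocks `M` (prefers the outside option to one of its partners). -/
def BlocksSchool (I : SchoolInstance A B) (M : Matching I) (b : B) : Prop :=
  ∃ a : A, M.toFun a = some b ∧ I.prefB b none (some a)

/-- Stability: no blocking pair and no blocking agent. -/
def Stable (I : SchoolInstance A B) (M : Matching I) : Prop :=
  (¬ ∃ a b, BlocksPair I M a b) ∧ (¬ ∃ a, BlocksStudent I M a) ∧ (¬ ∃ b, BlocksSchool I M b)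

/-- `M ≥ M'`: every student weakly prefers `M` to `M'`. -/
def matGE (I : SchoolInstance A B) (M M' : Matching I) : Prop :=
  ∀ a : A, M.toFun a = M'.toFun a ∨ I.prefA a (M.toFun a) (M'.toFun a)

/-- `M' < M` in the student order. -/
def matLT (I : SchoolInstance A B) (M' M : Matching I) : Prop :=
  matGE I M M' ∧ M'.toFun ≠ M.toFun

/-- `M'` is an immediate predecessor of `M` in `(S(I), ≥)`. -/
def ImmPred (I : SchoolInstance A B) (M' M : Matching I) : Prop :=
  Stable I M' ∧ Stable I M ∧ matLT I M' M ∧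
    ¬ ∃ M'' : Matching I, Stable I M'' ∧ matLT I M' M'' ∧ matLT I M'' M

/-- The type in which rotations live: pairs `(ρ₊, ρ₋)` of sets of
student/school pairs (with the outside option allowed on either side). -/
abbrev Rot (A B : Type) : Type :=
  Finset (Option A × Option B) × Finset (Option A × Option B)

/-- The set of pairs of a matching: each student with its partner, and each
under-quota school with the outside option. -/
def pairsOf (I : SchoolInstance A B) (M : Matching I) : Finset (Option A × Option B) :=
  Finset.univ.filter fun p =>
    (∃ a : A, p = (some a, M.toFun a)) ∨ (∃ b : B, hasSlack I M b ∧ p = (none, some b))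

/-- The rotation `ρ(M, M') = (M ∖ M', M' ∖ M)`. -/
def rho (I : SchoolInstance A B) (M M' : Matching I) : Rot A B :=
  (pairsOf I M \ pairsOf I M', pairsOf I M' \ pairsOf I M)

/-- `R(I)`: the set of all rotations of `I`. -/
def RotSet (I : SchoolInstance A B) : Set (Rot A B) :=
  {r | ∃ M M' : Matching I, ImmPred I M' M ∧ r = rho I M M'}

/-- `c` is a maximal chain of stable matchings from `M0` down to `M`:
consecutive entries are immediate predecessors. -/
def chainTo (I : SchoolInstance A B) (M0 M : Matching I) (c : List (Matching I)) : Prop :=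
  c.head? = some M0 ∧ c.getLast? = some M ∧ (∀ N ∈ c, Stable I N) ∧
    List.Chain' (fun X Y => ImmPred I Y X) c

/-- The set of rotations eliminated along the chain `c`. -/
def chainRots (I : SchoolInstance A B) (c : List (Matching I)) : Set (Rot A B) :=
  {r | ∃ (i : ℕ) (X Y : Matching I), getElem? c i = some X ∧ getElem? c (i + 1) = some Y ∧ r = rho I X Y}

/-- `ρ` is exposed in `M`. -/
def Exposed (I : SchoolInstance A B) (r : Rot A B) (M : Matching I) : Prop :=
  ∃ M', ImmPred I M' M ∧ r = rho I M M'

/-- The rotation poset `ρ ⊵ ρ'` (relative to the rotation-set map `RM`):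
either `ρ = ρ'`, or `ρ ∈ R_M` for every stable `M` in which `ρ'` is exposed. -/
def domRel (I : SchoolInstance A B) (RM : Matching I → Set (Rot A B)) (r r' : Rot A B) : Prop :=
  r = r' ∨ ∀ M, Stable I M → Exposed I r' M → r ∈ RM M

/-- `ρ ▷ ρ'`. -/
def strictDom (I : SchoolInstance A B) (RM : Matching I → Set (Rot A B)) (r r' : Rot A B) : Prop :=
  domRel I RM r r' ∧ r ≠ r'

/-- `R ⊆ R(I)` is upper-closed in the rotation poset. -/
def UpperClosed (I : SchoolInstance A B) (RM : Matching I → Set (Rot A B))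
    (R : Set (Rot A B)) : Prop :=
  R ⊆ RotSet I ∧ ∀ r' ∈ R, ∀ r ∈ RotSet I, domRel I RM r r' → r ∈ R

/-- `N` is the join `M ∨ M'` (least upper bound) in `(S(I), ≥)`. -/
def IsJoin (I : SchoolInstance A B) (M M' N : Matching I) : Prop :=
  Stable I N ∧ matGE I N M ∧ matGE I N M' ∧
    ∀ P, Stable I P → matGE I P M → matGE I P M' → matGE I P N

/-- `N` is the meet `M ∧ M'` (greatest lower bound) in `(S(I), ≥)`. -/
def IsMeet (I : SchoolInstance A B) (M M' N : Matching I) : Prop :=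
  Stable I N ∧ matGE I M N ∧ matGE I M' N ∧
    ∀ P, Stable I P → matGE I M P → matGE I M' P → matGE I N P

/-- `F` is a (nonempty) sublattice of the lattice of stable matchings. -/
def IsSublattice (I : SchoolInstance A B) (F : Set (Matching I)) : Prop :=
  F.Nonempty ∧ (∀ M ∈ F, Stable I M) ∧
    (∀ M ∈ F, ∀ M' ∈ F, ∃ N ∈ F, IsJoin I M M' N) ∧
    (∀ M ∈ F, ∀ M' ∈ F, ∃ N ∈ F, IsMeet I M M' N)

/-- `ρ ~ ρ'`: the two rotations are eliminated together in every matching of `F`. -/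
def rotEquiv (I : SchoolInstance A B) (RM : Matching I → Set (Rot A B))
    (F : Set (Matching I)) (r r' : Rot A B) : Prop :=
  ∀ M ∈ F, (r ∈ RM M ↔ r' ∈ RM M)

/-- The trivial meta-rotation `θ₀^F` of rotations eliminated in every matching of `F`. -/
def theta0 (I : SchoolInstance A B) (RM : Matching I → Set (Rot A B))
    (F : Set (Matching I)) : Set (Rot A B) :=
  {r | r ∈ RotSet I ∧ ∀ M ∈ F, r ∈ RM M}

/-- The trivial meta-rotation `θ_z^F` of rotations eliminated in no matching of `F`. -/
def thetaZ (I : SchoolInstance A B) (RM : Matching I → Set (Rot A B))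
    (F : Set (Matching I)) : Set (Rot A B) :=
  {r | r ∈ RotSet I ∧ ∀ M ∈ F, r ∉ RM M}

/-- `θ` is a meta-rotation of `F` (an equivalence class of `~`). -/
def IsMetaRot (I : SchoolInstance A B) (RM : Matching I → Set (Rot A B))
    (F : Set (Matching I)) (θ : Set (Rot A B)) : Prop :=
  ∃ r ∈ RotSet I, θ = {r' | r' ∈ RotSet I ∧ rotEquiv I RM F r r'}

/-- `θ` is a proper meta-rotation of `F`. -/
def IsProperMeta (I : SchoolInstance A B) (RM : Matching I → Set (Rot A B))
    (F : Set (Matching I)) (θ : Set (Rot A B)) : Prop :=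
  IsMetaRot I RM F θ ∧ θ ≠ theta0 I RM F ∧ θ ≠ thetaZ I RM F

/-- `θ ⊵^F θ'` on (proper) meta-rotations. -/
def metaDom (I : SchoolInstance A B) (RM : Matching I → Set (Rot A B))
    (F : Set (Matching I)) (θ θ' : Set (Rot A B)) : Prop :=
  ∀ M ∈ F, θ' ⊆ RM M → θ ⊆ RM M

/-- `Θ_M`: the set of proper meta-rotations contained in `R_M`. -/
def ThetaM (I : SchoolInstance A B) (RM : Matching I → Set (Rot A B))
    (F : Set (Matching I)) (M : Matching I) : Set (Set (Rot A B)) :=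
  {θ | IsProperMeta I RM F θ ∧ θ ⊆ RM M}

/-- `Θ` is an upper-closed set of proper meta-rotations. -/
def UCProper (I : SchoolInstance A B) (RM : Matching I → Set (Rot A B))
    (F : Set (Matching I)) (Θ : Set (Set (Rot A B))) : Prop :=
  (∀ θ ∈ Θ, IsProperMeta I RM F θ) ∧
    ∀ θ' ∈ Θ, ∀ θ, IsProperMeta I RM F θ → metaDom I RM F θ θ' → θ ∈ Θ

/-- `M_R`: the stable matching whose rotation set is `R` (via definite description). -/
def MofR (I : SchoolInstance A B) (RM : Matching I → Set (Rot A B))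
    (R : Set (Rot A B)) : Matching I :=
  Classical.epsilon fun M => Stable I M ∧ RM M = R

/-- `R^θ = θ₀^F ∪ ⋃ {θ' proper : θ' ⊵^F θ}`. -/
def Rup (I : SchoolInstance A B) (RM : Matching I → Set (Rot A B))
    (F : Set (Matching I)) (θ : Set (Rot A B)) : Set (Rot A B) :=
  theta0 I RM F ∪ ⋃₀ {θ' | IsProperMeta I RM F θ' ∧ metaDom I RM F θ' θ}

/-- `R_θ = θ₀^F ∪ ⋃ {θ' proper : θ' ▷^F θ}`. -/
def Rdn (I : SchoolInstance A B) (RM : Matching I → Set (Rot A B))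
    (F : Set (Matching I)) (θ : Set (Rot A B)) : Set (Rot A B) :=
  theta0 I RM F ∪ ⋃₀ {θ' | IsProperMeta I RM F θ' ∧ metaDom I RM F θ' θ ∧ θ' ≠ θ}

/-- `M^θ`. -/
def Mup (I : SchoolInstance A B) (RM : Matching I → Set (Rot A B))
    (F : Set (Matching I)) (θ : Set (Rot A B)) : Matching I :=
  MofR I RM (Rup I RM F θ)

/-- `M_θ`. -/
def Mdn (I : SchoolInstance A B) (RM : Matching I → Set (Rot A B))
    (F : Set (Matching I)) (θ : Set (Rot A B)) : Matching I :=
  MofR I RM (Rdn I RM F θ)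

/-- The meet `M ∧ M'` in the lattice of stable matchings (via definite description). -/
def meetM (I : SchoolInstance A B) (M M' : Matching I) : Matching I :=
  Classical.epsilon fun N => IsMeet I M M' N

/-- First order differential `∂f_θ = f(M^θ) − f(M_θ)`. -/
def d1 (I : SchoolInstance A B) (RM : Matching I → Set (Rot A B))
    (F : Set (Matching I)) (f : Matching I → ℝ) (θ : Set (Rot A B)) : ℝ :=
  f (Mup I RM F θ) - f (Mdn I RM F θ)

/-- Second order differential
`∂²f_{θ,θ'} = f(M^θ ∧ M_{θ'}) + f(M_θ ∧ M^{θ'}) − f(M_θ ∧ M_{θ'}) − f(M^θ ∧ M^{θ'})`. -/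
def d2 (I : SchoolInstance A B) (RM : Matching I → Set (Rot A B))
    (F : Set (Matching I)) (f : Matching I → ℝ) (θ θ' : Set (Rot A B)) : ℝ :=
  f (meetM I (Mup I RM F θ) (Mdn I RM F θ')) + f (meetM I (Mdn I RM F θ) (Mup I RM F θ'))
    - f (meetM I (Mdn I RM F θ) (Mdn I RM F θ')) - f (meetM I (Mup I RM F θ) (Mup I RM F θ'))

/-- The greatest element `M₀^F` of `F` (via definite description). -/
def topF (I : SchoolInstance A B) (F : Set (Matching I)) : Matching I :=
  Classical.epsilon fun N => N ∈ F ∧ ∀ P ∈ F, matGE I N P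

/-- Vertices of the digraph: all rotations, plus a source `s` and sink `t`. -/
abbrev Vtx (A B : Type) : Type := Rot A B ⊕ Bool

/-- The source `s`. -/
def srcV : Vtx A B := Sum.inr true

/-- The sink `t`. -/
def tgtV : Vtx A B := Sum.inr false

/-- The value of the cut `S` for the capacity function `u`: the total capacity
of the arcs leaving `S`. -/
def cutVal (u : Vtx A B → Vtx A B → ℝ≥0∞) (S : Set (Vtx A B)) : ℝ≥0∞ :=
  ∑ p : Vtx A B × Vtx A B, if p.1 ∈ S ∧ p.2 ∉ S then u p.1 p.2 else 0

/-- The `s`-`t` cut `{s} ∪ R`. -/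
def cutOf (R : Set (Rot A B)) : Set (Vtx A B) := insert srcV (Sum.inl '' R)

/-- `(u, C)` witnesses minimum cut representability of `Π(f, F)`: for every
`R ⊆ R(I)`, the cut `{s} ∪ R` has finite capacity iff `R` is upper-closed and
`M_R ∈ F`, and in that case its value is `f(M_R) + C`. -/
def MinCutRepWith (I : SchoolInstance A B) (RM : Matching I → Set (Rot A B))
    (F : Set (Matching I)) (f : Matching I → ℝ)
    (u : Vtx A B → Vtx A B → ℝ≥0∞) (C : ℝ) : Prop :=
  ∀ R : Set (Rot A B), R ⊆ RotSet I →
    ((cutVal u (cutOf R) ≠ ⊤ ↔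
        (UpperClosed I RM R ∧ ∃ M, Stable I M ∧ RM M = R ∧ M ∈ F)) ∧
      (∀ M, Stable I M → RM M = R → M ∈ F → (cutVal u (cutOf R)).toReal = f M + C))

/-- The problem `Π(f, F)` is minimum cut representable. -/
def MinCutRep (I : SchoolInstance A B) (RM : Matching I → Set (Rot A B))
    (F : Set (Matching I)) (f : Matching I → ℝ) : Prop :=
  ∃ u C, MinCutRepWith I RM F f u C

/-- The cut digraph `D^{f,F}` (with representative rotations `rep` and
constant `γ`); capacities of parallel arcs are added. -/
def cutDigraph (I : SchoolInstance A B) (RM : Matching I → Set (Rot A B))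
    (F : Set (Matching I)) (f : Matching I → ℝ)
    (rep : Set (Rot A B) → Rot A B) (γ : ℝ) : Vtx A B → Vtx A B → ℝ≥0∞ :=
  fun x y =>
    (if ∃ θ, IsMetaRot I RM F θ ∧ ∃ r ∈ θ, ∃ r' ∈ θ, r ≠ r' ∧ x = Sum.inl r ∧ y = Sum.inl r'
      then ⊤ else 0)
    + (if ∃ θ θ', IsProperMeta I RM F θ ∧ IsProperMeta I RM F θ' ∧ θ ≠ θ' ∧
          metaDom I RM F θ' θ ∧ x = Sum.inl (rep θ) ∧ y = Sum.inl (rep θ')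
        then ⊤ else 0)
    + (∑ θ : Set (Rot A B), ∑ θ' : Set (Rot A B),
        if IsProperMeta I RM F θ ∧ IsProperMeta I RM F θ' ∧ θ ≠ θ' ∧
            x = Sum.inl (rep θ) ∧ y = Sum.inl (rep θ')
        then ENNReal.ofReal ((1 / 2) * d2 I RM F f θ θ') else 0)
    + (if (theta0 I RM F).Nonempty ∧ x = srcV ∧ y = Sum.inl (rep (theta0 I RM F))
        then ⊤ else 0)
    + (if (thetaZ I RM F).Nonempty ∧ x = Sum.inl (rep (thetaZ I RM F)) ∧ y = tgtV
        then ⊤ else 0)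
    + (∑ θ : Set (Rot A B),
        if IsProperMeta I RM F θ ∧ x = Sum.inl (rep θ) ∧ y = tgtV
        then ENNReal.ofReal (d1 I RM F f θ -
          (1 / 2) * (∑ θ' : Set (Rot A B),
            if IsProperMeta I RM F θ' ∧ θ' ≠ θ then d2 I RM F f θ θ' else 0) + γ)
        else 0)
    + (∑ θ : Set (Rot A B),
        if IsProperMeta I RM F θ ∧ x = srcV ∧ y = Sum.inl (rep θ)
        then ENNReal.ofReal γ else 0)

/-- `b` prefers `S'` to `S''`: every member of `S'` is preferred to every
member of `S'' ∖ S'`. -/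
def prefersSet (I : SchoolInstance A B) (b : B) (S' S'' : Set (Option A)) : Prop :=
  ∀ x ∈ S', ∀ y ∈ S'', y ∉ S' → I.prefB b x y

/-- `A(ρ)`: students appearing in `ρ₊`. -/
def Aof (r : Rot A B) : Set A := {a | ∃ b : B, (some a, some b) ∈ r.1}

/-- `B(ρ)`: schools appearing in `ρ₊`. -/
def Bof (r : Rot A B) : Set B := {b | ∃ a : A, (some a, some b) ∈ r.1}

/-- `ρ₊(b)`: students matched to `b` in `ρ₊`. -/
def rhoPlusB (r : Rot A B) (b : B) : Set A := {a | (some a, some b) ∈ r.1}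

/-- `R^ρ = {ρ' : ρ' ⊵ ρ}`. -/
def RupRot (I : SchoolInstance A B) (RM : Matching I → Set (Rot A B))
    (r : Rot A B) : Set (Rot A B) :=
  {r' | r' ∈ RotSet I ∧ domRel I RM r' r}

/-- `R_ρ = {ρ' : ρ' ▷ ρ}`. -/
def RdnRot (I : SchoolInstance A B) (RM : Matching I → Set (Rot A B))
    (r : Rot A B) : Set (Rot A B) :=
  {r' | r' ∈ RotSet I ∧ strictDom I RM r' r}

/-- `M^ρ`. -/
def MupRot (I : SchoolInstance A B) (RM : Matching I → Set (Rot A B))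
    (r : Rot A B) : Matching I :=
  MofR I RM (RupRot I RM r)

/-- `M_ρ`. -/
def MdnRot (I : SchoolInstance A B) (RM : Matching I → Set (Rot A B))
    (r : Rot A B) : Matching I :=
  MofR I RM (RdnRot I RM r)

/-- First order differential of `f` at a rotation: `∂f_ρ = f(M^ρ) − f(M_ρ)`. -/
def d1Rot (I : SchoolInstance A B) (RM : Matching I → Set (Rot A B))
    (f : Matching I → ℝ) (r : Rot A B) : ℝ :=
  f (MupRot I RM r) - f (MdnRot I RM r)

/-- Second order differential of `f` at a pair of distinct rotations. -/
def d2Rot (I : SchoolInstance A B) (RM : Matching I → Set (Rot A B))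
    (f : Matching I → ℝ) (r r' : Rot A B) : ℝ :=
  f (meetM I (MupRot I RM r) (MdnRot I RM r')) + f (meetM I (MdnRot I RM r) (MupRot I RM r'))
    - f (meetM I (MdnRot I RM r) (MdnRot I RM r'))
    - f (meetM I (MupRot I RM r) (MupRot I RM r'))

/-- The pair `(ρ_in, ρ_out)` characterizes the stable matchings assigning both
siblings `a, ā` to school `b`. -/
def siblingChar (I : SchoolInstance A B) (RM : Matching I → Set (Rot A B))
    (a abar : A) (b : B) (p : Rot A B × Rot A B) : Prop :=
  ∀ M : Matching I, Stable I M →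
    ((M.toFun a = some b ∧ M.toFun abar = some b) ↔ (p.1 ∈ RM M ∧ p.2 ∉ RM M))

/-- Some stable matching assigns both `a` and `ā` to `b`. -/
def goodSchool (I : SchoolInstance A B) (a abar : A) (b : B) : Prop :=
  ∃ M, Stable I M ∧ M.toFun a = some b ∧ M.toFun abar = some b

/-- The pair `(ρ_in(a,ā,b), ρ_out(a,ā,b))` (via definite description). -/
def siblingPair (I : SchoolInstance A B) (RM : Matching I → Set (Rot A B))
    (a abar : A) (b : B) : Rot A B × Rot A B :=
  Classical.epsilon fun p => p.1 ∈ RotSet I ∧ p.2 ∈ RotSet I ∧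
    siblingChar I RM a abar b p ∧ strictDom I RM p.1 p.2

/-- `R_in(a, ā)`. -/
def Rin (I : SchoolInstance A B) (RM : Matching I → Set (Rot A B))
    (a abar : A) : Set (Rot A B) :=
  {r | ∃ b, goodSchool I a abar b ∧ r = (siblingPair I RM a abar b).1}

/-- `R_out(a, ā)`. -/
def Rout (I : SchoolInstance A B) (RM : Matching I → Set (Rot A B))
    (a abar : A) : Set (Rot A B) :=
  {r | ∃ b, goodSchool I a abar b ∧ r = (siblingPair I RM a abar b).2}

/-- The indicator function: `0` when the siblings are matched to the same
school, `1` otherwise. -/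
def sibIndicator (I : SchoolInstance A B) (a abar : A) : Matching I → ℝ :=
  fun M => if M.toFun a = M.toFun abar then 0 else 1

end SM

namespace SM

variable {A B : Type} [Fintype A] [Fintype B] [DecidableEq A] [DecidableEq B]


section AON

variable (I : SchoolInstance A B)

lemma pA_trans {a : A} {x y z : Option B} (h1 : I.prefA a x y) (h2 : I.prefA a y z) :
    I.prefA a x z := by
  haveI := I.prefA_sto a
  exact _root_.trans_of (I.prefA a) h1 h2

lemma pA_irrefl (a : A) (x : Option B) : ¬ I.prefA a x x := by
  haveI := I.prefA_sto a
  exact irrefl_of (I.prefA a) x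

lemma pA_asymm {a : A} {x y : Option B} (h : I.prefA a x y) : ¬ I.prefA a y x :=
  fun h' => pA_irrefl I a x (pA_trans I h h')

lemma pA_tri (a : A) (x y : Option B) : I.prefA a x y ∨ x = y ∨ I.prefA a y x := by
  haveI := I.prefA_sto a
  exact trichotomous_of (I.prefA a) x y

lemma pB_trans {b : B} {x y z : Option A} (h1 : I.prefB b x y) (h2 : I.prefB b y z) :
    I.prefB b x z := by
  haveI := I.prefB_sto b
  exact _root_.trans_of (I.prefB b) h1 h2

lemma pB_irrefl (b : B) (x : Option A) : ¬ I.prefB b x x := by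
  haveI := I.prefB_sto b
  exact irrefl_of (I.prefB b) x

lemma pB_asymm {b : B} {x y : Option A} (h : I.prefB b x y) : ¬ I.prefB b y x :=
  fun h' => pB_irrefl I b x (pB_trans I h h')

lemma pB_tri (b : B) (x y : Option A) : I.prefB b x y ∨ x = y ∨ I.prefB b y x := by
  haveI := I.prefB_sto b
  exact trichotomous_of (I.prefB b) x y

/-- students assigned to `b` in both, preferring `M` strictly, etc. -/
def cS (M N : Matching I) (b : B) : Finset A :=
  Finset.univ.filter fun a => M.toFun a = some b ∧ N.toFun a = some b

def sS (M N : Matching I) (b : B) : Finset A :=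
  Finset.univ.filter fun a => M.toFun a = some b ∧ I.prefA a (M.toFun a) (N.toFun a)

def sS' (M N : Matching I) (b : B) : Finset A :=
  Finset.univ.filter fun a => M.toFun a = some b ∧ I.prefA a (N.toFun a) (M.toFun a)

lemma cS_comm (M N : Matching I) (b : B) : cS I M N b = cS I N M b := by
  ext a; simp [cS, and_comm]

lemma stable_noneBlock {Z : Matching I} (hZ : Stable I Z) {a : A} {b : B}
    (h : Z.toFun a = some b) : ¬ I.prefB b none (some a) :=
  fun hp => hZ.2.2 ⟨b, a, h, hp⟩

lemma stable_prefBlock {Z : Matching I} (hZ : Stable I Z) {a : A} {b : B}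
    (h : I.prefA a (some b) (Z.toFun a)) :
    (hasSlack I Z b → I.prefB b none (some a)) ∧
      (∀ x, Z.toFun x = some b → I.prefB b (some x) (some a)) := by
  have hnb : ∀ x, inPartners I Z b x → ¬ I.prefB b (some a) x := by
    intro x hx hp; exact hZ.1 ⟨a, b, h, x, hx, hp⟩
  have hZa : Z.toFun a ≠ some b := fun he => pA_irrefl I a (some b) (by rw [he] at h; exact h)
  constructor
  · intro hs
    have h2 := hnb none (Or.inr ⟨rfl, hs⟩)
    rcases pB_tri I b (some a) none with h1 | h1 | h1
    · exact absurd h1 h2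
    · exact absurd h1 (by simp)
    · exact h1
  · intro x hx
    have h2 := hnb (some x) (Or.inl ⟨x, rfl, hx⟩)
    rcases pB_tri I b (some x) (some a) with h1 | h1 | h1
    · exact h1
    · exact absurd hx (by rw [Option.some_inj] at h1; rw [h1]; exact hZa)
    · exact absurd h1 h2

lemma sS_clash {M N : Matching I} (hM : Stable I M) (hN : Stable I N) {b : B} {a a' : A}
    (ha : a ∈ sS I M N b) (ha' : a' ∈ sS I N M b) : False := by
  simp only [sS, Finset.mem_filter, Finset.mem_univ, true_and] at ha ha'
  have h1 : I.prefA a (some b) (N.toFun a) := by rw [← ha.1]; exact ha.2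
  have h2 : I.prefA a' (some b) (M.toFun a') := by rw [← ha'.1]; exact ha'.2
  have e1 := (stable_prefBlock I hN h1).2 a' ha'.1
  have e2 := (stable_prefBlock I hM h2).2 a ha.1
  exact pB_asymm I e1 e2

lemma assigned_eq_union (M N : Matching I) (b : B) :
    assignedTo I M b = cS I M N b ∪ sS I M N b ∪ sS' I M N b := by
  ext a
  simp only [assignedTo, cS, sS, sS', Finset.mem_filter, Finset.mem_univ, true_and,
    Finset.mem_union]
  constructor
  · intro h
    rcases pA_tri I a (M.toFun a) (N.toFun a) with h1 | h1 | h1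
    · exact Or.inl (Or.inr ⟨h, h1⟩)
    · exact Or.inl (Or.inl ⟨h, by rw [← h1]; exact h⟩)
    · exact Or.inr ⟨h, h1⟩
  · rintro ((⟨h, -⟩ | ⟨h, -⟩) | ⟨h, -⟩) <;> exact h

lemma cS_sS_disj (M N : Matching I) (b : B) : Disjoint (cS I M N b) (sS I M N b) := by
  rw [Finset.disjoint_left]
  intro a ha ha'
  simp only [cS, sS, Finset.mem_filter, Finset.mem_univ, true_and] at ha ha'
  rw [ha.1, ha.2] at ha'
  exact pA_irrefl I a (some b) ha'.2

lemma cS_sS'_disj (M N : Matching I) (b : B) : Disjoint (cS I M N b) (sS' I M N b) := by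
  rw [Finset.disjoint_left]
  intro a ha ha'
  simp only [cS, sS', Finset.mem_filter, Finset.mem_univ, true_and] at ha ha'
  rw [ha.1, ha.2] at ha'
  exact pA_irrefl I a (some b) ha'.2

lemma sS_sS'_disj (M N : Matching I) (b : B) : Disjoint (sS I M N b) (sS' I M N b) := by
  rw [Finset.disjoint_left]
  intro a ha ha'
  simp only [sS, sS', Finset.mem_filter, Finset.mem_univ, true_and] at ha ha'
  exact pA_asymm I ha.2 ha'.2

lemma assigned_card (M N : Matching I) (b : B) :
    (assignedTo I M b).card
      = (cS I M N b).card + (sS I M N b).card + (sS' I M N b).card := by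
  rw [assigned_eq_union I M N b, Finset.card_union_of_disjoint, Finset.card_union_of_disjoint]
  · exact cS_sS_disj I M N b
  · rw [Finset.disjoint_union_left]
    exact ⟨cS_sS'_disj I M N b, sS_sS'_disj I M N b⟩

lemma quota_assigned (M : Matching I) (b : B) : (assignedTo I M b).card ≤ I.q b := by
  have h := M.quota b
  unfold assignedTo
  convert h using 2
  ext a
  simp

lemma sS_card_le {M N : Matching I} (hM : Stable I M) (hN : Stable I N) (b : B) :
    (sS I M N b).card ≤ (sS' I N M b).card := by
  rcases Finset.eq_empty_or_nonempty (sS I M N b) with he | ⟨a, ha⟩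
  · simp [he]
  have ha' := ha
  simp only [sS, Finset.mem_filter, Finset.mem_univ, true_and] at ha'
  have hb : I.prefA a (some b) (N.toFun a) := by rw [← ha'.1]; exact ha'.2
  have hfull : ¬ hasSlack I N b :=
    fun hs => stable_noneBlock I hM ha'.1 ((stable_prefBlock I hN hb).1 hs)
  have hNcard : (assignedTo I N b).card = I.q b :=
    le_antisymm (quota_assigned I N b) (not_lt.mp hfull)
  have hT : sS I N M b = ∅ :=
    Finset.eq_empty_of_forall_notMem fun x hx => sS_clash I hM hN ha hx
  have h1 := assigned_card I N M b
  have h2 := assigned_card I M N b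
  have h3 : (cS I M N b).card = (cS I N M b).card := by rw [cS_comm]
  have h4 := quota_assigned I M b
  rw [hT] at h1
  simp only [Finset.card_empty] at h1
  omega

lemma sS_card_eq {M N : Matching I} (hM : Stable I M) (hN : Stable I N) (b : B) :
    (sS I M N b).card = (sS' I N M b).card := by
  classical
  set P : Finset A := Finset.univ.filter fun a => I.prefA a (M.toFun a) (N.toFun a) with hP
  have hSP : ∀ b : B, sS I M N b = P.filter fun a => M.toFun a = some b := by
    intro b; ext a
    simp only [sS, hP, Finset.mem_filter, Finset.mem_univ, true_and]
    exact and_comm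
  have hS'P : ∀ b : B, sS' I N M b = P.filter fun a => N.toFun a = some b := by
    intro b; ext a
    simp only [sS', hP, Finset.mem_filter, Finset.mem_univ, true_and]
    exact and_comm
  have e1 : P.card = ∑ o : Option B, (P.filter fun a => M.toFun a = o).card :=
    Finset.card_eq_sum_card_fiberwise (fun a _ => Finset.mem_univ _)
  have e2 : P.card = ∑ o : Option B, (P.filter fun a => N.toFun a = o).card :=
    Finset.card_eq_sum_card_fiberwise (fun a _ => Finset.mem_univ _)
  rw [Fintype.sum_option] at e1 e2
  have hMnone : (P.filter fun a => M.toFun a = none).card = 0 := by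
    rw [Finset.card_eq_zero]
    apply Finset.eq_empty_of_forall_notMem
    intro a ha
    simp only [hP, Finset.mem_filter, Finset.mem_univ, true_and] at ha
    refine hN.2.1 ⟨a, ?_⟩
    unfold BlocksStudent
    rw [← ha.2]
    exact ha.1
  have hle : ∑ b : B, (sS I M N b).card ≤ ∑ b : B, (sS' I N M b).card :=
    Finset.sum_le_sum fun b _ => sS_card_le I hM hN b
  have hge : ∑ b : B, (sS' I N M b).card ≤ ∑ b : B, (sS I M N b).card := by
    have l1 : ∑ b : B, (sS I M N b).card = P.card := by
      rw [e1, hMnone]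
      simp only [zero_add]
      exact Finset.sum_congr rfl fun b _ => by rw [hSP]
    have l2 : ∑ b : B, (sS' I N M b).card ≤ P.card := by
      rw [e2]
      have : ∑ b : B, (sS' I N M b).card = ∑ b : B, (P.filter fun a => N.toFun a = some b).card :=
        Finset.sum_congr rfl fun b _ => by rw [hS'P]
      omega
    omega
  have heq : ∑ b : B, (sS I M N b).card = ∑ b : B, (sS' I N M b).card :=
    le_antisymm hle hge
  exact (Finset.sum_eq_sum_iff_of_le (fun b _ => sS_card_le I hM hN b)).mp heq b (Finset.mem_univ b)

lemma assigned_card_eq {M N : Matching I} (hM : Stable I M) (hN : Stable I N) (b : B) :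
    (assignedTo I M b).card = (assignedTo I N b).card := by
  have h1 := assigned_card I M N b
  have h2 := assigned_card I N M b
  have h3 := sS_card_eq I hM hN b
  have h4 := sS_card_eq I hN hM b
  have h5 := cS_comm I M N b
  rw [h5] at h1
  omega

lemma hasSlack_iff {M N : Matching I} (hM : Stable I M) (hN : Stable I N) (b : B) :
    hasSlack I M b ↔ hasSlack I N b := by
  unfold hasSlack
  rw [assigned_card_eq I hM hN b]

/-- pointwise max / min of two matchings. -/
def jf (M N : Matching I) (a : A) : Option B :=
  if I.prefA a (M.toFun a) (N.toFun a) then M.toFun a else N.toFun a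

def mfn (M N : Matching I) (a : A) : Option B :=
  if I.prefA a (M.toFun a) (N.toFun a) then N.toFun a else M.toFun a

lemma jf_mfn_cases (M N : Matching I) (a : A) :
    (jf I M N a = M.toFun a ∧ mfn I M N a = N.toFun a) ∨
      (jf I M N a = N.toFun a ∧ mfn I M N a = M.toFun a) := by
  unfold jf mfn
  by_cases h : I.prefA a (M.toFun a) (N.toFun a) <;> simp [h]

lemma jf_ge_left (M N : Matching I) (a : A) :
    jf I M N a = M.toFun a ∨ I.prefA a (jf I M N a) (M.toFun a) := by
  unfold jf
  by_cases h : I.prefA a (M.toFun a) (N.toFun a)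
  · simp [h]
  · simp only [h, if_false]
    rcases pA_tri I a (M.toFun a) (N.toFun a) with h1 | h1 | h1
    · exact absurd h1 h
    · exact Or.inl h1.symm
    · exact Or.inr h1

lemma jf_ge_right (M N : Matching I) (a : A) :
    jf I M N a = N.toFun a ∨ I.prefA a (jf I M N a) (N.toFun a) := by
  unfold jf
  by_cases h : I.prefA a (M.toFun a) (N.toFun a) <;> simp [h]

lemma mfn_le_left (M N : Matching I) (a : A) :
    M.toFun a = mfn I M N a ∨ I.prefA a (M.toFun a) (mfn I M N a) := by
  unfold mfn
  by_cases h : I.prefA a (M.toFun a) (N.toFun a) <;> simp [h]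

lemma mfn_le_right (M N : Matching I) (a : A) :
    N.toFun a = mfn I M N a ∨ I.prefA a (N.toFun a) (mfn I M N a) := by
  unfold mfn
  by_cases h : I.prefA a (M.toFun a) (N.toFun a)
  · simp [h]
  · simp only [h, if_false]
    rcases pA_tri I a (M.toFun a) (N.toFun a) with h1 | h1 | h1
    · exact absurd h1 h
    · exact Or.inl h1.symm
    · exact Or.inr h1

lemma jf_filter (M N : Matching I) (b : B) :
    (Finset.univ.filter fun a => jf I M N a = some b)
      = cS I M N b ∪ sS I M N b ∪ sS I N M b := by
  ext a
  simp only [cS, sS, Finset.mem_filter, Finset.mem_univ, true_and, Finset.mem_union]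
  unfold jf
  by_cases h : I.prefA a (M.toFun a) (N.toFun a)
  · rw [if_pos h]
    constructor
    · intro hb; exact Or.inl (Or.inr ⟨hb, h⟩)
    · rintro ((⟨hb, hb'⟩ | ⟨hb, -⟩) | ⟨hb, hc⟩)
      · exact hb
      · exact hb
      · exact absurd h (pA_asymm I hc)
  · rw [if_neg h]
    constructor
    · intro hb
      rcases pA_tri I a (M.toFun a) (N.toFun a) with h1 | h1 | h1
      · exact absurd h1 h
      · exact Or.inl (Or.inl ⟨h1 ▸ hb, hb⟩)
      · exact Or.inr ⟨hb, h1⟩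
    · rintro ((⟨hb, hb'⟩ | ⟨hb, hc⟩) | ⟨hb, -⟩)
      · exact hb'
      · exact absurd hc h
      · exact hb

lemma mfn_filter (M N : Matching I) (b : B) :
    (Finset.univ.filter fun a => mfn I M N a = some b)
      = cS I M N b ∪ sS' I M N b ∪ sS' I N M b := by
  ext a
  simp only [cS, sS', Finset.mem_filter, Finset.mem_univ, true_and, Finset.mem_union]
  unfold mfn
  by_cases h : I.prefA a (M.toFun a) (N.toFun a)
  · rw [if_pos h]
    constructor
    · intro hb; exact Or.inr ⟨hb, h⟩
    · rintro ((⟨hb, hb'⟩ | ⟨hb, hc⟩) | ⟨hb, -⟩)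
      · exact hb'
      · exact absurd h (pA_asymm I hc)
      · exact hb
  · rw [if_neg h]
    constructor
    · intro hb
      rcases pA_tri I a (M.toFun a) (N.toFun a) with h1 | h1 | h1
      · exact absurd h1 h
      · exact Or.inl (Or.inl ⟨hb, h1 ▸ hb⟩)
      · exact Or.inl (Or.inr ⟨hb, h1⟩)
    · rintro ((⟨hb, hb'⟩ | ⟨hb, -⟩) | ⟨hb, hc⟩)
      · exact hb
      · exact hb
      · exact absurd hc h

lemma cS_sSNM_disj (M N : Matching I) (b : B) : Disjoint (cS I M N b) (sS I N M b) := by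
  rw [cS_comm]; exact cS_sS_disj I N M b

lemma sS_sSNM_disj (M N : Matching I) (b : B) : Disjoint (sS I M N b) (sS I N M b) := by
  rw [Finset.disjoint_left]
  intro a ha ha'
  simp only [sS, Finset.mem_filter, Finset.mem_univ, true_and] at ha ha'
  exact pA_asymm I ha.2 ha'.2

lemma cS_sS'NM_disj (M N : Matching I) (b : B) : Disjoint (cS I M N b) (sS' I N M b) := by
  rw [cS_comm]; exact cS_sS'_disj I N M b

lemma sS'_sS'NM_disj (M N : Matching I) (b : B) : Disjoint (sS' I M N b) (sS' I N M b) := by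
  rw [Finset.disjoint_left]
  intro a ha ha'
  simp only [sS', Finset.mem_filter, Finset.mem_univ, true_and] at ha ha'
  exact pA_asymm I ha.2 ha'.2

lemma jf_card {M N : Matching I} (hM : Stable I M) (hN : Stable I N) (b : B) :
    (Finset.univ.filter fun a => jf I M N a = some b).card = (assignedTo I M b).card := by
  rw [jf_filter, Finset.card_union_of_disjoint, Finset.card_union_of_disjoint (cS_sS_disj I M N b)]
  · have h1 := sS_card_eq I hN hM b
    have h2 := assigned_card I M N b
    omega
  · rw [Finset.disjoint_union_left]
    exact ⟨cS_sSNM_disj I M N b, sS_sSNM_disj I M N b⟩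

lemma mfn_card {M N : Matching I} (hM : Stable I M) (hN : Stable I N) (b : B) :
    (Finset.univ.filter fun a => mfn I M N a = some b).card = (assignedTo I M b).card := by
  rw [mfn_filter, Finset.card_union_of_disjoint, Finset.card_union_of_disjoint (cS_sS'_disj I M N b)]
  · have h1 := sS_card_eq I hM hN b
    have h2 := assigned_card I M N b
    omega
  · rw [Finset.disjoint_union_left]
    exact ⟨cS_sS'NM_disj I M N b, sS'_sS'NM_disj I M N b⟩

/-- join of two stable matchings. -/
def joinMat (M N : Matching I) (hM : Stable I M) (hN : Stable I N) : Matching I :=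
  ⟨jf I M N, fun b => by
    have h := jf_card I hM hN b
    have h2 := quota_assigned I M b
    have h3 : (Finset.univ.filter fun a => jf I M N a = some b).card ≤ I.q b := by omega
    convert h3 using 2
    ext a
    simp⟩

/-- meet of two stable matchings. -/
def meetMat (M N : Matching I) (hM : Stable I M) (hN : Stable I N) : Matching I :=
  ⟨mfn I M N, fun b => by
    have h := mfn_card I hM hN b
    have h2 := quota_assigned I M b
    have h3 : (Finset.univ.filter fun a => mfn I M N a = some b).card ≤ I.q b := by omega
    convert h3 using 2
    ext a
    simp⟩

lemma joinMat_toFun (M N : Matching I) (hM : Stable I M) (hN : Stable I N) :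
    (joinMat I M N hM hN).toFun = jf I M N := rfl

lemma meetMat_toFun (M N : Matching I) (hM : Stable I M) (hN : Stable I N) :
    (meetMat I M N hM hN).toFun = mfn I M N := rfl

lemma joinMat_slack {M N : Matching I} (hM : Stable I M) (hN : Stable I N) (b : B) :
    hasSlack I (joinMat I M N hM hN) b ↔ hasSlack I M b := by
  unfold hasSlack
  have h : (assignedTo I (joinMat I M N hM hN) b).card = (assignedTo I M b).card := by
    rw [← jf_card I hM hN b]
    congr 1
  rw [h]

lemma meetMat_slack {M N : Matching I} (hM : Stable I M) (hN : Stable I N) (b : B) :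
    hasSlack I (meetMat I M N hM hN) b ↔ hasSlack I M b := by
  unfold hasSlack
  have h : (assignedTo I (meetMat I M N hM hN) b).card = (assignedTo I M b).card := by
    rw [← mfn_card I hM hN b]
    congr 1
  rw [h]

lemma mfn_mem (M N : Matching I) (a : A) :
    mfn I M N a = M.toFun a ∨ mfn I M N a = N.toFun a := by
  rcases jf_mfn_cases I M N a with ⟨-, h⟩ | ⟨-, h⟩
  · exact Or.inr h
  · exact Or.inl h

lemma jf_mem (M N : Matching I) (a : A) :
    jf I M N a = M.toFun a ∨ jf I M N a = N.toFun a := by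
  rcases jf_mfn_cases I M N a with ⟨h, -⟩ | ⟨h, -⟩
  · exact Or.inl h
  · exact Or.inr h

lemma joinMat_stable {M N : Matching I} (hM : Stable I M) (hN : Stable I N) :
    Stable I (joinMat I M N hM hN) := by
  set J := joinMat I M N hM hN with hJ
  have hJf : ∀ a, J.toFun a = jf I M N a := fun a => rfl
  refine ⟨?_, ?_, ?_⟩
  · rintro ⟨a, b, hpref, x, hxin, hxpref⟩
    rw [hJf] at hpref
    have hbM : I.prefA a (some b) (M.toFun a) := by
      rcases jf_ge_left I M N a with h | h
      · rw [← h]; exact hpref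
      · exact pA_trans I hpref h
    have hbN : I.prefA a (some b) (N.toFun a) := by
      rcases jf_ge_right I M N a with h | h
      · rw [← h]; exact hpref
      · exact pA_trans I hpref h
    have eM := stable_prefBlock I hM hbM
    have eN := stable_prefBlock I hN hbN
    rcases hxin with ⟨a', rfl, ha'⟩ | ⟨rfl, hsl⟩
    · rw [hJf] at ha'
      have : a' ∈ Finset.univ.filter fun a => jf I M N a = some b := by
        simp only [Finset.mem_filter, Finset.mem_univ, true_and]; exact ha'
      rw [jf_filter] at this
      simp only [Finset.mem_union, cS, sS, Finset.mem_filter, Finset.mem_univ, true_and] at this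
      rcases this with (⟨h1, -⟩ | ⟨h1, -⟩) | ⟨h1, -⟩
      · exact pB_asymm I (eM.2 a' h1) hxpref
      · exact pB_asymm I (eM.2 a' h1) hxpref
      · exact pB_asymm I (eN.2 a' h1) hxpref
    · rw [joinMat_slack I hM hN] at hsl
      exact pB_asymm I (eM.1 hsl) hxpref
  · rintro ⟨a, ha⟩
    unfold BlocksStudent at ha
    rw [hJf] at ha
    rcases jf_mem I M N a with h | h <;> rw [h] at ha
    · exact hM.2.1 ⟨a, ha⟩
    · exact hN.2.1 ⟨a, ha⟩
  · rintro ⟨b, a, hab, hpb⟩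
    rw [hJf] at hab
    rcases jf_mem I M N a with h | h <;> rw [h] at hab
    · exact hM.2.2 ⟨b, a, hab, hpb⟩
    · exact hN.2.2 ⟨b, a, hab, hpb⟩

lemma meet_aux {M N : Matching I} (hM : Stable I M) (hN : Stable I N) {a : A} {b : B}
    (hpref : I.prefA a (some b) (M.toFun a)) {x : A}
    (hx : mfn I M N x = some b) (hxp : I.prefB b (some a) (some x)) : False := by
  have eM := stable_prefBlock I hM hpref
  have hxmem : x ∈ Finset.univ.filter fun a => mfn I M N a = some b := by
    simp only [Finset.mem_filter, Finset.mem_univ, true_and]; exact hx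
  rw [mfn_filter] at hxmem
  simp only [Finset.mem_union, cS, sS', Finset.mem_filter, Finset.mem_univ, true_and] at hxmem
  rcases hxmem with (⟨h1, -⟩ | ⟨h1, -⟩) | ⟨h1, h2⟩
  · exact pB_asymm I (eM.2 x h1) hxp
  · exact pB_asymm I (eM.2 x h1) hxp
  · -- x ∈ sS' N M b : N x = some b, x prefers M; find y ∈ sS M N b
    have hxS : x ∈ sS' I N M b := by
      simp only [sS', Finset.mem_filter, Finset.mem_univ, true_and]; exact ⟨h1, h2⟩
    have hcard : 0 < (sS I M N b).card := by
      have := sS_card_eq I hM hN b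
      have : 0 < (sS' I N M b).card := Finset.card_pos.mpr ⟨x, hxS⟩
      omega
    obtain ⟨y, hy⟩ := Finset.card_pos.mp hcard
    have hy' := hy
    simp only [sS, Finset.mem_filter, Finset.mem_univ, true_and] at hy'
    have hyb : I.prefA y (some b) (N.toFun y) := by rw [← hy'.1]; exact hy'.2
    have e1 := (stable_prefBlock I hN hyb).2 x h1
    have e2 := eM.2 y hy'.1
    exact pB_asymm I (pB_trans I e1 e2) hxp

lemma mfn_comm (M N : Matching I) (a : A) : mfn I M N a = mfn I N M a := by
  unfold mfn
  rcases pA_tri I a (M.toFun a) (N.toFun a) with h | h | h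
  · rw [if_pos h, if_neg (pA_asymm I h)]
  · rw [h]
  · rw [if_neg (pA_asymm I h), if_pos h]

lemma meetMat_stable {M N : Matching I} (hM : Stable I M) (hN : Stable I N) :
    Stable I (meetMat I M N hM hN) := by
  set K := meetMat I M N hM hN with hK
  have hKf : ∀ a, K.toFun a = mfn I M N a := fun a => rfl
  refine ⟨?_, ?_, ?_⟩
  · rintro ⟨a, b, hpref, x, hxin, hxpref⟩
    rw [hKf] at hpref
    rcases hxin with ⟨a', rfl, ha'⟩ | ⟨rfl, hsl⟩
    · rw [hKf] at ha'
      rcases mfn_mem I M N a with hmm | hmm <;> rw [hmm] at hpref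
      · exact meet_aux I hM hN hpref ha' hxpref
      · refine meet_aux I hN hM hpref ?_ hxpref
        rw [← mfn_comm]; exact ha'
    · rw [meetMat_slack I hM hN] at hsl
      rcases mfn_mem I M N a with hmm | hmm <;> rw [hmm] at hpref
      · exact pB_asymm I ((stable_prefBlock I hM hpref).1 hsl) hxpref
      · have hslN : hasSlack I N b := (hasSlack_iff I hM hN b).mp hsl
        exact pB_asymm I ((stable_prefBlock I hN hpref).1 hslN) hxpref
  · rintro ⟨a, ha⟩
    unfold BlocksStudent at ha
    rw [hKf] at ha
    rcases mfn_mem I M N a with h | h <;> rw [h] at ha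
    · exact hM.2.1 ⟨a, ha⟩
    · exact hN.2.1 ⟨a, ha⟩
  · rintro ⟨b, a, hab, hpb⟩
    rw [hKf] at hab
    rcases mfn_mem I M N a with h | h <;> rw [h] at hab
    · exact hM.2.2 ⟨b, a, hab, hpb⟩
    · exact hN.2.2 ⟨b, a, hab, hpb⟩

/- order infrastructure -/

lemma geA_trans {a : A} {x y z : Option B} (h1 : x = y ∨ I.prefA a x y)
    (h2 : y = z ∨ I.prefA a y z) : x = z ∨ I.prefA a x z := by
  rcases h1 with rfl | h1
  · exact h2
  · rcases h2 with rfl | h2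
    · exact Or.inr h1
    · exact Or.inr (pA_trans I h1 h2)

lemma geA_antisymm {a : A} {x y : Option B} (h1 : x = y ∨ I.prefA a x y)
    (h2 : y = x ∨ I.prefA a y x) : x = y := by
  rcases h1 with rfl | h1
  · rfl
  · rcases h2 with rfl | h2
    · rfl
    · exact absurd h2 (pA_asymm I h1)

lemma matGE_trans {X Y Z : Matching I} (h1 : matGE I X Y) (h2 : matGE I Y Z) : matGE I X Z :=
  fun a => geA_trans I (h1 a) (h2 a)

lemma matGE_antisymm {X Y : Matching I} (h1 : matGE I X Y) (h2 : matGE I Y X) :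
    X.toFun = Y.toFun :=
  funext fun a => geA_antisymm I (h1 a) (h2 a)

lemma matGE_join_left (M N : Matching I) (hM : Stable I M) (hN : Stable I N) :
    matGE I (joinMat I M N hM hN) M := fun a => jf_ge_left I M N a

lemma matGE_join_right (M N : Matching I) (hM : Stable I M) (hN : Stable I N) :
    matGE I (joinMat I M N hM hN) N := fun a => jf_ge_right I M N a

lemma matGE_meet_left (M N : Matching I) (hM : Stable I M) (hN : Stable I N) :
    matGE I M (meetMat I M N hM hN) := fun a => mfn_le_left I M N a

lemma matGE_meet_right (M N : Matching I) (hM : Stable I M) (hN : Stable I N) :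
    matGE I N (meetMat I M N hM hN) := fun a => mfn_le_right I M N a

lemma matGE_join_lub {M N Z : Matching I} (hM : Stable I M) (hN : Stable I N)
    (h1 : matGE I Z M) (h2 : matGE I Z N) : matGE I Z (joinMat I M N hM hN) := by
  intro a
  rcases jf_mem I M N a with h | h
  · have := h1 a; rw [joinMat_toFun, h]; exact this
  · have := h2 a; rw [joinMat_toFun, h]; exact this

lemma matGE_meet_glb {M N Z : Matching I} (hM : Stable I M) (hN : Stable I N)
    (h1 : matGE I M Z) (h2 : matGE I N Z) : matGE I (meetMat I M N hM hN) Z := by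
  intro a
  rcases mfn_mem I M N a with h | h
  · have := h1 a
    show mfn I M N a = Z.toFun a ∨ I.prefA a (mfn I M N a) (Z.toFun a)
    rw [h]; exact this
  · have := h2 a
    show mfn I M N a = Z.toFun a ∨ I.prefA a (mfn I M N a) (Z.toFun a)
    rw [h]; exact this

lemma mem_pairsOf {Z : Matching I} {p : Option A × Option B} :
    p ∈ pairsOf I Z ↔
      (∃ a, p = (some a, Z.toFun a)) ∨ (∃ b, hasSlack I Z b ∧ p = (none, some b)) := by
  simp [pairsOf]

lemma pairs_some {Z : Matching I} {a : A} {c : Option B} :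
    ((some a, c) ∈ pairsOf I Z) ↔ c = Z.toFun a := by
  rw [mem_pairsOf]
  constructor
  · rintro (⟨a', he⟩ | ⟨b, hs, he⟩)
    · rw [Prod.mk.injEq] at he
      obtain ⟨he1, he2⟩ := he
      rw [Option.some_inj] at he1
      rw [← he1] at he2
      exact he2
    · rw [Prod.mk.injEq] at he
      exact absurd he.1 (by simp)
  · intro h
    exact Or.inl ⟨a, by rw [h]⟩

lemma pairs_none {Z : Matching I} {y : Option B} :
    ((none, y) ∈ pairsOf I Z) ↔ ∃ b, y = some b ∧ hasSlack I Z b := by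
  rw [mem_pairsOf]
  constructor
  · rintro (⟨a', he⟩ | ⟨b, hs, he⟩)
    · rw [Prod.mk.injEq] at he
      exact absurd he.1 (by simp)
    · rw [Prod.mk.injEq] at he
      exact ⟨b, he.2, hs⟩
  · rintro ⟨b, rfl, hs⟩
    exact Or.inr ⟨b, hs, rfl⟩

lemma pairsOf_congr {X Y : Matching I} (h : X.toFun = Y.toFun) :
    pairsOf I X = pairsOf I Y := by
  rcases X with ⟨f, hf⟩
  rcases Y with ⟨g, hg⟩
  change f = g at h
  subst h
  rfl

lemma rho_transfer {M M' K X : Matching I} (hM : Stable I M) (hM' : Stable I M')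
    (hK : Stable I K) (hX : Stable I X)
    (hjf : ∀ a, M.toFun a = jf I K M' a) (hmfn : ∀ a, X.toFun a = mfn I K M' a) :
    rho I M M' = rho I K X := by
  have slMM' := hasSlack_iff I hM hM'
  have slKX := hasSlack_iff I hK hX
  have key : ∀ (P Q R S : Matching I), (∀ b, hasSlack I P b ↔ hasSlack I Q b) →
      (∀ b, hasSlack I R b ↔ hasSlack I S b) →
      (∀ (a : A) (py : Option B),
        ((py = P.toFun a ∧ ¬ py = Q.toFun a) ↔ (py = R.toFun a ∧ ¬ py = S.toFun a))) →
      pairsOf I P \ pairsOf I Q = pairsOf I R \ pairsOf I S := by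
    intro P Q R S hPQ hRS hiff
    ext p
    obtain ⟨px, py⟩ := p
    cases px with
    | none =>
      rw [Finset.mem_sdiff, Finset.mem_sdiff, pairs_none, pairs_none, pairs_none, pairs_none]
      constructor
      · rintro ⟨⟨b, rfl, hs⟩, hn⟩
        exact absurd ⟨b, rfl, (hPQ b).mp hs⟩ hn
      · rintro ⟨⟨b, rfl, hs⟩, hn⟩
        exact absurd ⟨b, rfl, (hRS b).mp hs⟩ hn
    | some a =>
      rw [Finset.mem_sdiff, Finset.mem_sdiff, pairs_some, pairs_some, pairs_some, pairs_some]
      exact hiff a py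
  unfold rho
  have hiff1 : ∀ (a : A) (py : Option B),
      ((py = M.toFun a ∧ ¬ py = M'.toFun a) ↔ (py = K.toFun a ∧ ¬ py = X.toFun a)) := by
    intro a py
    rw [hjf a, hmfn a]
    rcases jf_mfn_cases I K M' a with ⟨h1, h2⟩ | ⟨h1, h2⟩ <;> rw [h1, h2]
    constructor
    · rintro ⟨hp, hq⟩; exact absurd hp hq
    · rintro ⟨hp, hq⟩; exact absurd hp hq
  have hiff2 : ∀ (a : A) (py : Option B),
      ((py = M'.toFun a ∧ ¬ py = M.toFun a) ↔ (py = X.toFun a ∧ ¬ py = K.toFun a)) := by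
    intro a py
    rw [hjf a, hmfn a]
    rcases jf_mfn_cases I K M' a with ⟨h1, h2⟩ | ⟨h1, h2⟩ <;> rw [h1, h2]
    constructor
    · rintro ⟨hp, hq⟩; exact absurd hp hq
    · rintro ⟨hp, hq⟩; exact absurd hp hq
  rw [key M M' K X slMM' slKX hiff1, key M' M X K (fun b => (slMM' b).symm)
    (fun b => (slKX b).symm) hiff2]

lemma jf_eq_fst {M N : Matching I} {a : A} (h : jf I M N a = M.toFun a) :
    M.toFun a = N.toFun a ∨ I.prefA a (M.toFun a) (N.toFun a) := by
  unfold jf at h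
  by_cases hc : I.prefA a (M.toFun a) (N.toFun a)
  · exact Or.inr hc
  · rw [if_neg hc] at h
    exact Or.inl h.symm

lemma jf_eq_snd {M N : Matching I} {a : A} (h : jf I M N a = N.toFun a) :
    M.toFun a = N.toFun a ∨ I.prefA a (N.toFun a) (M.toFun a) := by
  unfold jf at h
  by_cases hc : I.prefA a (M.toFun a) (N.toFun a)
  · rw [if_pos hc] at h
    exact Or.inl h
  · rcases pA_tri I a (M.toFun a) (N.toFun a) with h1 | h1 | h1
    · exact absurd h1 hc
    · exact Or.inl h1
    · exact Or.inr h1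

lemma step_main {M M' : Matching I} (hMM' : ImmPred I M' M) {K : Matching I}
    (hK : Stable I K) (hKM : matGE I M K) (a0 : A)
    (hw : I.prefA a0 (K.toFun a0) (M'.toFun a0)) :
    (∀ a, M.toFun a = jf I K M' a) ∧ ImmPred I (meetMat I K M' hK hMM'.1) K := by
  obtain ⟨hM', hM, ⟨hGE, hneMM⟩, hmid⟩ := hMM'
  set X := meetMat I K M' hK hM' with hXdef
  have hXs : Stable I X := meetMat_stable I hK hM'
  -- Part 1 : M = K ∨ M'
  have hMeq : ∀ a, M.toFun a = jf I K M' a := by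
    set J := joinMat I K M' hK hM' with hJdef
    have hJs : Stable I J := joinMat_stable I hK hM'
    have hJne : J.toFun ≠ M'.toFun := by
      intro h
      have h0 : jf I K M' a0 = M'.toFun a0 := congrFun h a0
      rw [show jf I K M' a0 = K.toFun a0 from if_pos hw] at h0
      rw [h0] at hw
      exact pA_irrefl I a0 _ hw
    have hJM : J.toFun = M.toFun := by
      by_contra hJM
      exact hmid ⟨J, hJs, ⟨matGE_join_right I K M' hK hM', fun h => hJne h.symm⟩,
        ⟨matGE_join_lub I hK hM' hKM hGE, hJM⟩⟩
    exact fun a => (congrFun hJM a).symm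
  refine ⟨hMeq, hXs, hK, ⟨matGE_meet_left I K M' hK hM', ?_⟩, ?_⟩
  · -- X ≠ K
    intro h
    have h0 : mfn I K M' a0 = K.toFun a0 := congrFun h a0
    rw [show mfn I K M' a0 = M'.toFun a0 from if_pos hw] at h0
    rw [← h0] at hw
    exact pA_irrefl I a0 _ hw
  · -- no stable matching strictly between X and K
    rintro ⟨Z, hZs, hXZ, hZK⟩
    set W := joinMat I Z M' hZs hM' with hWdef
    have hWs : Stable I W := joinMat_stable I hZs hM'
    have hWne' : W.toFun ≠ M'.toFun := by
      intro h
      have hZM' : matGE I M' Z := by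
        intro a
        have h0 : jf I Z M' a = M'.toFun a := congrFun h a
        rcases jf_eq_snd I h0 with h1 | h1
        · exact Or.inl h1.symm
        · exact Or.inr h1
      have hXZge : matGE I X Z := matGE_meet_glb I hK hM' hZK.1 hZM'
      exact hXZ.2 (matGE_antisymm I hXZ.1 hXZge).symm
    have hWneM : W.toFun ≠ M.toFun := by
      intro h
      obtain ⟨a1, hne1⟩ := Function.ne_iff.mp hZK.2
      have hlt1 : I.prefA a1 (K.toFun a1) (Z.toFun a1) := by
        rcases hZK.1 a1 with he | hp
        · exact absurd he.symm hne1
        · exact hp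
      rcases pA_tri I a1 (K.toFun a1) (M'.toFun a1) with hc | hc | hc
      · -- K ≻ M' at a1 : M a1 = K a1, but W a1 ∈ {Z a1, M' a1} both ≺ K a1
        have hMa1 : M.toFun a1 = K.toFun a1 := by
          rw [hMeq a1]; exact if_pos hc
        have h0 : jf I Z M' a1 = K.toFun a1 := by
          have h2 := congrFun h a1
          rw [hMa1] at h2
          exact h2
        rcases jf_mem I Z M' a1 with h1 | h1 <;> rw [h1] at h0
        · exact hne1 h0
        · rw [h0] at hc
          exact pA_irrefl I a1 _ hc
      · -- K a1 = M' a1 : X a1 = K a1, contradiction with Z between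
        have hXa1 : X.toFun a1 = K.toFun a1 := by
          rcases mfn_mem I K M' a1 with h1 | h1
          · exact h1
          · show mfn I K M' a1 = K.toFun a1
            rw [h1, hc]
        rcases hXZ.1 a1 with he | hp
        · exact hne1 (he.trans hXa1)
        · rw [hXa1] at hp
          exact pA_asymm I hlt1 hp
      · -- M' ≻ K at a1 : X a1 = K a1, same contradiction
        have hXa1 : X.toFun a1 = K.toFun a1 := by
          show mfn I K M' a1 = K.toFun a1
          unfold mfn
          rw [if_neg (pA_asymm I hc)]
        rcases hXZ.1 a1 with he | hp
        · exact hne1 (he.trans hXa1)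
        · rw [hXa1] at hp
          exact pA_asymm I hlt1 hp
    exact hmid ⟨W, hWs, ⟨matGE_join_right I Z M' hZs hM', fun h => hWne' h.symm⟩,
      ⟨matGE_join_lub I hZs hM' (matGE_trans I hKM hZK.1) hGE, hWneM⟩⟩

lemma rho_aon {M M' N N' : Matching I} (hMM' : ImmPred I M' M) (hNN' : ImmPred I N' N)
    (a0 : A) (c : Option B)
    (hcase : (M.toFun a0 = c ∧ M'.toFun a0 ≠ c ∧ N.toFun a0 = c ∧ N'.toFun a0 ≠ c) ∨
        (M'.toFun a0 = c ∧ M.toFun a0 ≠ c ∧ N'.toFun a0 = c ∧ N.toFun a0 ≠ c)) :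
    rho I M M' = rho I N N' := by
  have hM' := hMM'.1
  have hM := hMM'.2.1
  have hGEM := hMM'.2.2.1.1
  have hN' := hNN'.1
  have hN := hNN'.2.1
  have hGEN := hNN'.2.2.1.1
  set K := meetMat I M N hM hN with hKdef
  have hKs : Stable I K := meetMat_stable I hM hN
  have hKM : matGE I M K := matGE_meet_left I M N hM hN
  have hKN : matGE I N K := matGE_meet_right I M N hM hN
  have hpM : I.prefA a0 (M.toFun a0) (M'.toFun a0) := by
    rcases hGEM a0 with he | hp
    · exfalso
      rcases hcase with ⟨h1, h2, -, -⟩ | ⟨h1, h2, -, -⟩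
      · exact h2 (he.symm.trans h1)
      · exact h2 (he.trans h1)
    · exact hp
  have hpN : I.prefA a0 (N.toFun a0) (N'.toFun a0) := by
    rcases hGEN a0 with he | hp
    · exfalso
      rcases hcase with ⟨-, -, h3, h4⟩ | ⟨-, -, h3, h4⟩
      · exact h4 (he.symm.trans h3)
      · exact h4 (he.trans h3)
    · exact hp
  have hKmem : K.toFun a0 = M.toFun a0 ∨ K.toFun a0 = N.toFun a0 := mfn_mem I M N a0
  have hwM : I.prefA a0 (K.toFun a0) (M'.toFun a0) := by
    rcases hcase with ⟨h1, h2, h3, h4⟩ | ⟨h1, h2, h3, h4⟩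
    · rcases hKmem with h | h
      · rw [h]; exact hpM
      · rw [h, h3, ← h1]; exact hpM
    · rcases hKmem with h | h
      · rw [h]; exact hpM
      · rw [h, h1, ← h3]; exact hpN
  have hwN : I.prefA a0 (K.toFun a0) (N'.toFun a0) := by
    rcases hcase with ⟨h1, h2, h3, h4⟩ | ⟨h1, h2, h3, h4⟩
    · rcases hKmem with h | h
      · rw [h, h1, ← h3]; exact hpN
      · rw [h]; exact hpN
    · rcases hKmem with h | h
      · rw [h, h3, ← h1]; exact hpM
      · rw [h]; exact hpN
  have hfin : (K.toFun a0 = c ∧ M'.toFun a0 ≠ c ∧ N'.toFun a0 ≠ c) ∨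
      (I.prefA a0 (K.toFun a0) c ∧ M'.toFun a0 = c ∧ N'.toFun a0 = c) := by
    rcases hcase with ⟨h1, h2, h3, h4⟩ | ⟨h1, h2, h3, h4⟩
    · refine Or.inl ⟨?_, h2, h4⟩
      rcases hKmem with h | h
      · exact h.trans h1
      · exact h.trans h3
    · exact Or.inr ⟨by rw [← h1]; exact hwM, h1, h3⟩
  obtain ⟨hMeq, hXimm⟩ := step_main I hMM' hKs hKM a0 hwM
  obtain ⟨hNeq, hYimm⟩ := step_main I hNN' hKs hKN a0 hwN
  set X := meetMat I K M' hKs hMM'.1 with hXdef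
  set Y := meetMat I K N' hKs hNN'.1 with hYdef
  have hXs : Stable I X := hXimm.1
  have hYs : Stable I Y := hYimm.1
  have t1 : rho I M M' = rho I K X :=
    rho_transfer I hM hM' hKs hXs hMeq (fun a => rfl)
  have t2 : rho I N N' = rho I K Y :=
    rho_transfer I hN hN' hKs hYs hNeq (fun a => rfl)
  rw [t1, t2]
  by_cases hXY : X.toFun = Y.toFun
  · unfold rho
    rw [pairsOf_congr I hXY]
  · exfalso
    set J2 := joinMat I X Y hXs hYs with hJ2def
    have hJ2s : Stable I J2 := joinMat_stable I hXs hYs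
    have hGEKJ2 : matGE I K J2 :=
      matGE_join_lub I hXs hYs hXimm.2.2.1.1 hYimm.2.2.1.1
    have hJ2X : J2.toFun ≠ X.toFun := by
      intro h
      have hgeXY : matGE I X Y := by
        intro a
        have h0 : jf I X Y a = X.toFun a := congrFun h a
        exact jf_eq_fst I h0
      exact hYimm.2.2.2 ⟨X, hXs, ⟨hgeXY, fun h' => hXY h'.symm⟩, hXimm.2.2.1⟩
    have hJ2K : J2.toFun = K.toFun := by
      by_contra hc
      exact hXimm.2.2.2 ⟨J2, hJ2s,
        ⟨matGE_join_left I X Y hXs hYs, fun h => hJ2X h.symm⟩, ⟨hGEKJ2, hc⟩⟩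
    have hXa0 : X.toFun a0 = M'.toFun a0 := by
      show mfn I K M' a0 = M'.toFun a0
      unfold mfn
      rw [if_pos hwM]
    have hYa0 : Y.toFun a0 = N'.toFun a0 := by
      show mfn I K N' a0 = N'.toFun a0
      unfold mfn
      rw [if_pos hwN]
    have hK0 : K.toFun a0 = jf I X Y a0 := (congrFun hJ2K a0).symm
    rcases hfin with ⟨hKc, h2, h4⟩ | ⟨hKc, h2, h4⟩
    · rcases jf_mem I X Y a0 with h | h
      · exact h2 (by rw [← hXa0, ← h, ← hK0, hKc])
      · exact h4 (by rw [← hYa0, ← h, ← hK0, hKc])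
    · rcases jf_mem I X Y a0 with h | h
      · have e : K.toFun a0 = c := by rw [hK0, h, hXa0, h2]
        rw [e] at hKc
        exact pA_irrefl I a0 c hKc
      · have e : K.toFun a0 = c := by rw [hK0, h, hYa0, h4]
        rw [e] at hKc
        exact pA_irrefl I a0 c hKc

end AON

/-- all-or-nothing property. -/
theorem stmt14 (I : SchoolInstance A B) (r r' : Rot A B)
    (hr : r ∈ RotSet I) (hr' : r' ∈ RotSet I) (hne : r ≠ r') :
    r.1 ∩ r'.1 = ∅ ∧ r.2 ∩ r'.2 = ∅ := by
  obtain ⟨M, M', hMM', hrEq⟩ := hr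
  obtain ⟨N, N', hNN', hr'Eq⟩ := hr'
  subst hrEq hr'Eq
  have hM' := hMM'.1
  have hM := hMM'.2.1
  have hN' := hNN'.1
  have hN := hNN'.2.1
  constructor
  · apply Finset.eq_empty_of_forall_notMem
    intro p hp
    rw [Finset.mem_inter] at hp
    obtain ⟨hp1, hp2⟩ := hp
    rw [show (rho I M M').1 = pairsOf I M \ pairsOf I M' from rfl, Finset.mem_sdiff] at hp1
    rw [show (rho I N N').1 = pairsOf I N \ pairsOf I N' from rfl, Finset.mem_sdiff] at hp2
    obtain ⟨px, py⟩ := p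
    cases px with
    | none =>
      obtain ⟨b, rfl, hsl⟩ := (pairs_none I).mp hp1.1
      exact hp1.2 ((pairs_none I).mpr ⟨b, rfl, (hasSlack_iff I hM hM' b).mp hsl⟩)
    | some a0 =>
      rw [pairs_some, pairs_some] at hp1 hp2
      refine hne (rho_aon I hMM' hNN' a0 py (Or.inl ?_))
      exact ⟨hp1.1.symm, fun h => hp1.2 h.symm, hp2.1.symm, fun h => hp2.2 h.symm⟩
  · apply Finset.eq_empty_of_forall_notMem
    intro p hp
    rw [Finset.mem_inter] at hp
    obtain ⟨hp1, hp2⟩ := hp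
    rw [show (rho I M M').2 = pairsOf I M' \ pairsOf I M from rfl, Finset.mem_sdiff] at hp1
    rw [show (rho I N N').2 = pairsOf I N' \ pairsOf I N from rfl, Finset.mem_sdiff] at hp2
    obtain ⟨px, py⟩ := p
    cases px with
    | none =>
      obtain ⟨b, rfl, hsl⟩ := (pairs_none I).mp hp1.1
      exact hp1.2 ((pairs_none I).mpr ⟨b, rfl, (hasSlack_iff I hM' hM b).mp hsl⟩)
    | some a0 =>
      rw [pairs_some, pairs_some] at hp1 hp2
      refine hne (rho_aon I hMM' hNN' a0 py (Or.inr ?_))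
      exact ⟨hp1.1.symm, fun h => hp1.2 h.symm, hp2.1.symm, fun h => hp2.2 h.symm⟩

end SM
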